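/- Explicit sandpile solution on ℤ, second stage: with w_{xy} = 1 iff |x-y|=1, f(t,x) = α·1_{{0}}(x), for t₁ = 1/α ≤ t ≤ 4/α the function u(t,x) = (α/3)(t-t₁)·1_{{-1}}(x) + (1 + (α/3)(t-t₁))·1_{{0}}(x) + (α/3)(t-t₁)·1_{{1}}(x) satisfies u(t) ∈ K_∞^G and ∫_ℤ (f(t,x)-u_t(t,x))(v(x)-u(t,x)) dν_G(x) = (2α/3)(v(0) - (v(1)+v(-1))/2 - 1) ≤ 0 for all v ∈ K_∞^G; hence it is a strong solution on that time interval. -/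
import Mathlib


/-- Second stage of the explicit sandpile solution on ℤ, for 1/α ≤ t ≤ 4/α. -/
theorem stmt17 (α : ℝ) (hα : 0 < α)
    (u : ℝ → ℤ → ℝ)
    (hu : ∀ t x, u t x =
      if x = 0 then 1 + (α / 3) * (t - 1 / α)
      else if x = 1 ∨ x = -1 then (α / 3) * (t - 1 / α)
      else 0)
    (f : ℤ → ℝ) (hf : ∀ x, f x = if x = 0 then α else 0)
    (ut : ℤ → ℝ)
    (hut : ∀ x, ut x = if x = 0 ∨ x = 1 ∨ x = -1 then α / 3 else 0) :
    ∀ t : ℝ, 1 / α ≤ t → t ≤ 4 / α →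
      (∀ x : ℤ, HasDerivAt (fun s => u s x) (ut x) t) ∧
      -- u(t) ∈ K_∞^G
      ((Summable fun x : ℤ => (u t x) ^ 2 * 2) ∧
        ∀ x y : ℤ, |x - y| = 1 → |u t y - u t x| ≤ 1) ∧
      -- explicit value of the variational expression and its nonpositivity
      (∀ v : ℤ → ℝ, (Summable fun x : ℤ => (v x) ^ 2 * 2) →
        (∀ x y : ℤ, |x - y| = 1 → |v y - v x| ≤ 1) →
          (∑' x : ℤ, (f x - ut x) * (v x - u t x) =
              (2 * α / 3) * (v 0 - (v 1 + v (-1)) / 2 - 1)) ∧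
          (2 * α / 3) * (v 0 - (v 1 + v (-1)) / 2 - 1) ≤ 0) := by
  intro t ht1 ht2
  have hs0 : 0 ≤ (α / 3) * (t - 1 / α) := by
    apply mul_nonneg (by linarith) (by linarith)
  have hs1 : (α / 3) * (t - 1 / α) ≤ 1 := by
    have h3 : t - 1 / α ≤ 3 / α := by
      have : (1:ℝ) / α + 3 / α = 4 / α := by ring
      linarith
    calc (α / 3) * (t - 1 / α) ≤ (α / 3) * (3 / α) := by
          apply mul_le_mul_of_nonneg_left h3 (by linarith)
      _ = 1 := by field_simp
  refine ⟨?_, ⟨?_, ?_⟩, ?_⟩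
  · intro x
    by_cases hx : x = 0
    · have hfun : (fun s => u s x) = fun s => 1 + (α / 3) * (s - 1 / α) := by
        funext s; rw [hu]; simp [hx]
      have hv : ut x = α / 3 := by rw [hut]; simp [hx]
      rw [hfun, hv]
      have := (((hasDerivAt_id t).sub_const (1 / α)).const_mul (α / 3)).const_add 1
      simpa using this
    · by_cases hx1 : x = 1 ∨ x = -1
      · have hfun : (fun s => u s x) = fun s => (α / 3) * (s - 1 / α) := by
          funext s; rw [hu]; simp [hx, hx1]
        have hv : ut x = α / 3 := by
          rw [hut]; simp [hx, hx1]
        rw [hfun, hv]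
        have := ((hasDerivAt_id t).sub_const (1 / α)).const_mul (α / 3)
        simpa using this
      · have hfun : (fun s => u s x) = fun _ => (0 : ℝ) := by
          funext s; rw [hu]; simp [hx, hx1]
        have hv : ut x = 0 := by
          rw [hut]; simp [hx, hx1]
        rw [hfun, hv]
        exact hasDerivAt_const t 0
  · apply summable_of_ne_finset_zero (s := ({0, 1, -1} : Finset ℤ))
    intro x hx
    simp only [Finset.mem_insert, Finset.mem_singleton] at hx
    push_neg at hx
    rw [hu]
    simp [hx.1, hx.2.1, hx.2.2]
  · intro x y hxy
    have h := (abs_eq (by norm_num : (0:ℤ) ≤ 1)).mp hxy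
    rw [hu, hu]
    split_ifs <;>
      first
        | (exfalso; omega)
        | (rw [abs_le]; constructor <;> linarith)
  · intro v _ hv
    constructor
    · rw [tsum_eq_sum (s := ({0, 1, -1} : Finset ℤ)) ?_]
      · norm_num [Finset.sum_insert, hf, hut, hu]
        ring
      · intro x hx
        simp only [Finset.mem_insert, Finset.mem_singleton] at hx
        push_neg at hx
        rw [hf, hut]
        simp [hx.1, hx.2.1, hx.2.2]
    · have h1 := hv 0 1 (by norm_num)
      have h2 := hv 0 (-1) (by norm_num)
      rw [abs_le] at h1 h2
      apply mul_nonpos_of_nonneg_of_nonpos (by linarith)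
      linarith [h1.2, h2.2]
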